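/- With notation as in the context: (1) there exists a real number L such that R·C = L·Q(g,C) (equality of (0,6)-tensors) if and only if μ = 0, or a = 0 and b = 0; and (2) if a = 0 and b = 0 then R·C = (k̃ + c²)·Q(g,C). (This is the pointwise algebraic form of the theorem characterizing Weyl-pseudo-symmetric Wintgen ideal submanifolds, with the displayed identity R·C = (k̃ + c²)Q(g,C).) -/

import Mathlib

noncomputable section

namespace Wintgen

/-- The standard inner product `g` on `ℝ^n`. -/
def gg (n : ℕ) (x y : Fin n → ℝ) : ℝ := ∑ i, x i * y i

/-- The standard orthonormal basis vectors `E_i` (0-indexed). -/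
def E (n : ℕ) (i : Fin n) : Fin n → ℝ := fun j => if j = i then 1 else 0

/-- Auxiliary: the `j`-th coordinate of `x` (0 if out of range). -/
def coord (n : ℕ) (x : Fin n → ℝ) (j : ℕ) : ℝ := if h : j < n then x ⟨j, h⟩ else 0

/-- The Choi–Lu shape operator `A_1`. -/
def A1 (n : ℕ) (a μ : ℝ) (x : Fin n → ℝ) : Fin n → ℝ := fun i =>
  if (i : ℕ) = 0 then a * x i + μ * coord n x 1
  else if (i : ℕ) = 1 then μ * coord n x 0 + a * x i
  else a * x i

/-- The Choi–Lu shape operator `A_2`. -/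
def A2 (n : ℕ) (b μ : ℝ) (x : Fin n → ℝ) : Fin n → ℝ := fun i =>
  if (i : ℕ) = 0 then (b + μ) * x i
  else if (i : ℕ) = 1 then (b - μ) * x i
  else b * x i

/-- The Choi–Lu shape operator `A_3 = c • id`. -/
def A3 (n : ℕ) (c : ℝ) (x : Fin n → ℝ) : Fin n → ℝ := fun i => c * x i

/-- The Gauss-equation curvature tensor `R`. -/
def Rt (n : ℕ) (a b c μ k : ℝ) (X Y Z W : Fin n → ℝ) : ℝ :=
  (gg n (A1 n a μ X) W * gg n (A1 n a μ Y) Z - gg n (A1 n a μ X) Z * gg n (A1 n a μ Y) W)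
  + (gg n (A2 n b μ X) W * gg n (A2 n b μ Y) Z - gg n (A2 n b μ X) Z * gg n (A2 n b μ Y) W)
  + (gg n (A3 n c X) W * gg n (A3 n c Y) Z - gg n (A3 n c X) Z * gg n (A3 n c Y) W)
  + k * (gg n X W * gg n Y Z - gg n X Z * gg n Y W)

/-- The Ricci tensor `Ricc(X,Y) = ∑ i, R(E_i, X, Y, E_i)`. -/
def Ricc (n : ℕ) (a b c μ k : ℝ) (X Y : Fin n → ℝ) : ℝ :=
  ∑ i, Rt n a b c μ k (E n i) X Y (E n i)

/-- The scalar curvature `τ`. -/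
def tau (n : ℕ) (a b c μ k : ℝ) : ℝ := ∑ i, Ricc n a b c μ k (E n i) (E n i)

/-- The Kulkarni–Nomizu product of two bilinear forms. -/
def KN (n : ℕ) (A B : (Fin n → ℝ) → (Fin n → ℝ) → ℝ) (X1 X2 X3 X4 : Fin n → ℝ) : ℝ :=
  A X1 X4 * B X2 X3 + A X2 X3 * B X1 X4 - A X1 X3 * B X2 X4 - A X2 X4 * B X1 X3

/-- The Weyl conformal curvature tensor `C`. -/
def Ct (n : ℕ) (a b c μ k : ℝ) (X Y Z W : Fin n → ℝ) : ℝ :=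
  Rt n a b c μ k X Y Z W
    - (1 / ((n : ℝ) - 2)) * KN n (gg n) (Ricc n a b c μ k) X Y Z W
    + (tau n a b c μ k / (2 * ((n : ℝ) - 1) * ((n : ℝ) - 2))) * KN n (gg n) (gg n) X Y Z W

/-- The endomorphism `(X ∧_A Y)` applied to `Z`. -/
def wedge (n : ℕ) (A : (Fin n → ℝ) → (Fin n → ℝ) → ℝ) (X Y Z : Fin n → ℝ) : Fin n → ℝ :=
  fun j => A Y Z * X j - A X Z * Y j

/-- The endomorphism determined by `g(Op(X,Y)Z, W) = T(X,Y,Z,W)`: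
its `j`-th component is `T(X,Y,Z,E_j)`. -/
def curvOp (n : ℕ) (T : (Fin n → ℝ) → (Fin n → ℝ) → (Fin n → ℝ) → (Fin n → ℝ) → ℝ)
    (X Y Z : Fin n → ℝ) : Fin n → ℝ := fun j => T X Y Z (E n j)

/-- Derivation-type action of a family of operators on a (0,4)-tensor. -/
def dotT (n : ℕ) (Op : (Fin n → ℝ) → (Fin n → ℝ) → (Fin n → ℝ) → (Fin n → ℝ))
    (T : (Fin n → ℝ) → (Fin n → ℝ) → (Fin n → ℝ) → (Fin n → ℝ) → ℝ)
    (X1 X2 X3 X4 X Y : Fin n → ℝ) : ℝ :=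
  - T (Op X Y X1) X2 X3 X4 - T X1 (Op X Y X2) X3 X4
  - T X1 X2 (Op X Y X3) X4 - T X1 X2 X3 (Op X Y X4)

/-- The (0,6)-tensor `R · C`. -/
def RC (n : ℕ) (a b c μ k : ℝ) :=
  dotT n (fun X Y => curvOp n (Rt n a b c μ k) X Y) (Ct n a b c μ k)

/-- The (0,6)-tensor `C · R`. -/
def CR (n : ℕ) (a b c μ k : ℝ) :=
  dotT n (fun X Y => curvOp n (Ct n a b c μ k) X Y) (Rt n a b c μ k)

/-- The Tachibana tensor `Q(A, T)`. -/
def Q (n : ℕ) (A : (Fin n → ℝ) → (Fin n → ℝ) → ℝ)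
    (T : (Fin n → ℝ) → (Fin n → ℝ) → (Fin n → ℝ) → (Fin n → ℝ) → ℝ) :=
  dotT n (fun X Y => wedge n A X Y) T

def pp (n : ℕ) (x y : Fin n → ℝ) : ℝ :=
  coord n x 0 * coord n y 1 + coord n x 1 * coord n y 0
def dd (n : ℕ) (x y : Fin n → ℝ) : ℝ :=
  coord n x 0 * coord n y 0 - coord n x 1 * coord n y 1
def qq (n : ℕ) (x y : Fin n → ℝ) : ℝ :=
  coord n x 0 * coord n y 0 + coord n x 1 * coord n y 1

lemma gg_comm (n : ℕ) (x y : Fin n → ℝ) : gg n x y = gg n y x :=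
  Finset.sum_congr rfl fun i _ => mul_comm _ _

lemma coord_eq (n m : ℕ) (h : m < n) (x : Fin n → ℝ) : coord n x m = x ⟨m, h⟩ := dif_pos h

lemma ggE (n : ℕ) (i : Fin n) (x : Fin n → ℝ) : gg n (E n i) x = x i := by
  simp [gg, E, Finset.sum_ite_eq]

lemma ggE' (n : ℕ) (i : Fin n) (x : Fin n → ℝ) : gg n x (E n i) = x i := by
  rw [gg_comm]; exact ggE n i x

lemma ggEE (n : ℕ) (i j : Fin n) : gg n (E n i) (E n j) = if i = j then 1 else 0 := by
  rw [ggE]; simp [E, eq_comm]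

lemma coordE0 (n : ℕ) (h2 : 2 ≤ n) (i : Fin n) :
    coord n (E n i) 0 = if (i : ℕ) = 0 then 1 else 0 := by
  rw [coord_eq n 0 (by omega)]
  simp [E, Fin.ext_iff, eq_comm]

lemma coordE1 (n : ℕ) (h2 : 2 ≤ n) (i : Fin n) :
    coord n (E n i) 1 = if (i : ℕ) = 1 then 1 else 0 := by
  rw [coord_eq n 1 (by omega)]
  simp [E, Fin.ext_iff, eq_comm]

lemma sum_ind0 (n : ℕ) (h2 : 2 ≤ n) (f : Fin n → ℝ) :
    (∑ j : Fin n, if (j : ℕ) = 0 then f j else 0) = f ⟨0, by omega⟩ := by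
  have h : ∀ j : Fin n, ((j : ℕ) = 0) = (j = ⟨0, by omega⟩) := by
    intro j; simp [Fin.ext_iff]
  simp_rw [h]
  simp

lemma sum_ind1 (n : ℕ) (h2 : 2 ≤ n) (f : Fin n → ℝ) :
    (∑ j : Fin n, if (j : ℕ) = 1 then f j else 0) = f ⟨1, by omega⟩ := by
  have h : ∀ j : Fin n, ((j : ℕ) = 1) = (j = ⟨1, by omega⟩) := by
    intro j; simp [Fin.ext_iff]
  simp_rw [h]
  simp

lemma sum_split2 (n : ℕ) (h2 : 2 ≤ n) (f : Fin n → ℝ) :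
    ∑ j, f j = f ⟨0, by omega⟩ + f ⟨1, by omega⟩
      + ∑ j ∈ (Finset.univ.erase ⟨0, by omega⟩).erase ⟨1, by omega⟩, f j := by
  have h10 : (⟨1, by omega⟩ : Fin n) ≠ ⟨0, by omega⟩ := by simp [Fin.ext_iff]
  rw [← Finset.sum_erase_add _ _ (Finset.mem_univ (⟨0, by omega⟩ : Fin n))]
  rw [← Finset.sum_erase_add _ _ (Finset.mem_erase.2 ⟨h10, Finset.mem_univ _⟩)]
  ring

lemma card_split2 (n : ℕ) (h2 : 2 ≤ n) :
    ((Finset.univ.erase (⟨0, by omega⟩ : Fin n)).erase ⟨1, by omega⟩).card = n - 2 := by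
  have h10 : (⟨1, by omega⟩ : Fin n) ≠ ⟨0, by omega⟩ := by simp [Fin.ext_iff]
  rw [Finset.card_erase_of_mem (Finset.mem_erase.2 ⟨h10, Finset.mem_univ _⟩),
    Finset.card_erase_of_mem (Finset.mem_univ _)]
  simp
  omega

lemma mem_split2 (n : ℕ) (h2 : 2 ≤ n) (j : Fin n)
    (hj : j ∈ (Finset.univ.erase (⟨0, by omega⟩ : Fin n)).erase ⟨1, by omega⟩) :
    (j : ℕ) ≠ 0 ∧ (j : ℕ) ≠ 1 := by
  rw [Finset.mem_erase, Finset.mem_erase] at hj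
  exact ⟨fun h => hj.2.1 (Fin.ext h), fun h => hj.1 (Fin.ext h)⟩


def B1 (n : ℕ) (a μ : ℝ) (x y : Fin n → ℝ) : ℝ := a * gg n x y + μ * pp n x y
def B2 (n : ℕ) (b μ : ℝ) (x y : Fin n → ℝ) : ℝ := b * gg n x y + μ * dd n x y

lemma gg_A1 (n : ℕ) (h2 : 2 ≤ n) (a μ : ℝ) (x w : Fin n → ℝ) :
    gg n (A1 n a μ x) w = B1 n a μ x w := by
  unfold A1 B1 pp gg
  have key : ∀ j : Fin n,
      (if (j : ℕ) = 0 then a * x j + μ * coord n x 1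
        else if (j : ℕ) = 1 then μ * coord n x 0 + a * x j else a * x j) * w j
      = a * (x j * w j) + (if (j : ℕ) = 0 then μ * coord n x 1 * w j else 0)
        + (if (j : ℕ) = 1 then μ * coord n x 0 * w j else 0) := by
    intro j
    split_ifs
    all_goals try ring
    all_goals (exfalso; omega)
  simp_rw [key]
  rw [Finset.sum_add_distrib, Finset.sum_add_distrib, ← Finset.mul_sum,
    sum_ind0 n h2, sum_ind1 n h2, ← coord_eq n 0 (by omega) w, ← coord_eq n 1 (by omega) w]
  ring

lemma gg_A2 (n : ℕ) (h2 : 2 ≤ n) (b μ : ℝ) (x w : Fin n → ℝ) :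
    gg n (A2 n b μ x) w = B2 n b μ x w := by
  unfold A2 B2 dd gg
  have key : ∀ j : Fin n,
      (if (j : ℕ) = 0 then (b + μ) * x j
        else if (j : ℕ) = 1 then (b - μ) * x j else b * x j) * w j
      = b * (x j * w j) + (if (j : ℕ) = 0 then μ * (x j * w j) else 0)
        + (if (j : ℕ) = 1 then -(μ * (x j * w j)) else 0) := by
    intro j
    split_ifs
    all_goals try ring
    all_goals (exfalso; omega)
  simp_rw [key]
  rw [Finset.sum_add_distrib, Finset.sum_add_distrib, ← Finset.mul_sum,
    sum_ind0 n h2, sum_ind1 n h2, ← coord_eq n 0 (by omega) x, ← coord_eq n 1 (by omega) x,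
    ← coord_eq n 0 (by omega) w, ← coord_eq n 1 (by omega) w]
  ring

lemma gg_A3 (n : ℕ) (c : ℝ) (x w : Fin n → ℝ) :
    gg n (A3 n c x) w = c * gg n x w := by
  unfold gg A3
  rw [Finset.mul_sum]
  exact Finset.sum_congr rfl fun j _ => by ring

lemma Rt_eq (n : ℕ) (h2 : 2 ≤ n) (a b c μ k : ℝ) (X Y Z W : Fin n → ℝ) :
    Rt n a b c μ k X Y Z W
      = B1 n a μ X W * B1 n a μ Y Z - B1 n a μ X Z * B1 n a μ Y W
        + (B2 n b μ X W * B2 n b μ Y Z - B2 n b μ X Z * B2 n b μ Y W)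
        + (c ^ 2 + k) * (gg n X W * gg n Y Z - gg n X Z * gg n Y W) := by
  unfold Rt
  rw [gg_A1 n h2, gg_A1 n h2, gg_A1 n h2, gg_A1 n h2, gg_A2 n h2, gg_A2 n h2,
    gg_A2 n h2, gg_A2 n h2, gg_A3, gg_A3, gg_A3, gg_A3]
  ring

lemma Ricc_eq (n : ℕ) (h2 : 2 ≤ n) (a b c μ k : ℝ) (X Y : Fin n → ℝ) :
    Ricc n a b c μ k X Y
      = ((n : ℝ) - 1) * (a ^ 2 + b ^ 2 + c ^ 2 + k) * gg n X Y
        + ((n : ℝ) - 2) * (a * μ) * pp n X Y + ((n : ℝ) - 2) * (b * μ) * dd n X Y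
        - 2 * μ ^ 2 * qq n X Y := by
  have key : ∀ i : Fin n, Rt n a b c μ k (E n i) X Y (E n i)
      = if i = (⟨0, by omega⟩ : Fin n) then
          (a * B1 n a μ X Y
            - (a * coord n Y 0 + μ * coord n Y 1) * (a * coord n X 0 + μ * coord n X 1)
            + (b + μ) * B2 n b μ X Y - (b + μ) ^ 2 * (coord n X 0 * coord n Y 0)
            + (c ^ 2 + k) * (gg n X Y - coord n X 0 * coord n Y 0))
        else if i = (⟨1, by omega⟩ : Fin n) then
          (a * B1 n a μ X Y
            - (a * coord n Y 1 + μ * coord n Y 0) * (a * coord n X 1 + μ * coord n X 0)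
            + (b - μ) * B2 n b μ X Y - (b - μ) ^ 2 * (coord n X 1 * coord n Y 1)
            + (c ^ 2 + k) * (gg n X Y - coord n X 1 * coord n Y 1))
        else
          ((a * B1 n a μ X Y + b * B2 n b μ X Y + (c ^ 2 + k) * gg n X Y)
            + (-(a ^ 2 + b ^ 2 + c ^ 2 + k)) * (X i * Y i)) := by
    intro i
    by_cases hi0 : i = (⟨0, by omega⟩ : Fin n)
    · subst hi0
      rw [if_pos rfl, Rt_eq n h2]
      unfold B1 B2 pp dd
      simp [E, ggE, ggE', ggEE, coordE0 n h2, coordE1 n h2,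
        coord_eq n 0 (by omega), coord_eq n 1 (by omega)]
      ring
    · rw [if_neg hi0]
      by_cases hi1 : i = (⟨1, by omega⟩ : Fin n)
      · subst hi1
        rw [if_pos rfl, Rt_eq n h2]
        unfold B1 B2 pp dd
        simp [E, ggE, ggE', ggEE, coordE0 n h2, coordE1 n h2,
          coord_eq n 0 (by omega), coord_eq n 1 (by omega)]
        ring
      · rw [if_neg hi1, Rt_eq n h2]
        have hv0 : (i : ℕ) ≠ 0 := fun h => hi0 (Fin.ext h)
        have hv1 : (i : ℕ) ≠ 1 := fun h => hi1 (Fin.ext h)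
        unfold B1 B2 pp dd
        simp [E, ggE, ggE', ggEE, coordE0 n h2, coordE1 n h2, hv0, hv1]
        ring
  unfold Ricc
  rw [Finset.sum_congr rfl fun i _ => key i, sum_split2 n h2]
  rw [if_pos rfl, if_neg (by simp [Fin.ext_iff]), if_pos rfl]
  have hrest : ∑ j ∈ (Finset.univ.erase (⟨0, by omega⟩ : Fin n)).erase ⟨1, by omega⟩,
      (if j = (⟨0, by omega⟩ : Fin n) then
          (a * B1 n a μ X Y
            - (a * coord n Y 0 + μ * coord n Y 1) * (a * coord n X 0 + μ * coord n X 1)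
            + (b + μ) * B2 n b μ X Y - (b + μ) ^ 2 * (coord n X 0 * coord n Y 0)
            + (c ^ 2 + k) * (gg n X Y - coord n X 0 * coord n Y 0))
        else if j = (⟨1, by omega⟩ : Fin n) then
          (a * B1 n a μ X Y
            - (a * coord n Y 1 + μ * coord n Y 0) * (a * coord n X 1 + μ * coord n X 0)
            + (b - μ) * B2 n b μ X Y - (b - μ) ^ 2 * (coord n X 1 * coord n Y 1)
            + (c ^ 2 + k) * (gg n X Y - coord n X 1 * coord n Y 1))
        else
          ((a * B1 n a μ X Y + b * B2 n b μ X Y + (c ^ 2 + k) * gg n X Y)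
            + (-(a ^ 2 + b ^ 2 + c ^ 2 + k)) * (X j * Y j)))
      = ∑ j ∈ (Finset.univ.erase (⟨0, by omega⟩ : Fin n)).erase ⟨1, by omega⟩,
          ((a * B1 n a μ X Y + b * B2 n b μ X Y + (c ^ 2 + k) * gg n X Y)
            + (-(a ^ 2 + b ^ 2 + c ^ 2 + k)) * (X j * Y j)) := by
    refine Finset.sum_congr rfl fun j hj => ?_
    obtain ⟨hj0, hj1⟩ := mem_split2 n h2 j hj
    rw [if_neg (fun h => hj0 (congrArg Fin.val h)), if_neg (fun h => hj1 (congrArg Fin.val h))]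
  rw [hrest, Finset.sum_add_distrib, Finset.sum_const, ← Finset.mul_sum, card_split2 n h2]
  have hS : ∑ j ∈ (Finset.univ.erase (⟨0, by omega⟩ : Fin n)).erase ⟨1, by omega⟩, X j * Y j
      = gg n X Y - X ⟨0, by omega⟩ * Y ⟨0, by omega⟩ - X ⟨1, by omega⟩ * Y ⟨1, by omega⟩ := by
    have := sum_split2 n h2 (fun j => X j * Y j)
    have hgg : gg n X Y = ∑ j, X j * Y j := rfl
    rw [hgg]
    linarith [this]
  rw [hS]
  have hcast : ((n - 2 : ℕ) : ℝ) = (n : ℝ) - 2 := by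
    have : (2 : ℕ) ≤ n := h2
    push_cast [Nat.cast_sub this]
    ring
  rw [nsmul_eq_mul, hcast]
  unfold B1 B2 pp dd qq
  rw [coord_eq n 0 (by omega) X, coord_eq n 1 (by omega) X,
    coord_eq n 0 (by omega) Y, coord_eq n 1 (by omega) Y]
  ring

lemma tau_eq (n : ℕ) (h2 : 2 ≤ n) (a b c μ k : ℝ) :
    tau n a b c μ k = (n : ℝ) * ((n : ℝ) - 1) * (a ^ 2 + b ^ 2 + c ^ 2 + k) - 4 * μ ^ 2 := by
  unfold tau
  have key : ∀ i : Fin n, Ricc n a b c μ k (E n i) (E n i)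
      = ((n : ℝ) - 1) * (a ^ 2 + b ^ 2 + c ^ 2 + k) * gg n (E n i) (E n i)
        + ((n : ℝ) - 2) * (a * μ) * pp n (E n i) (E n i)
        + ((n : ℝ) - 2) * (b * μ) * dd n (E n i) (E n i)
        - 2 * μ ^ 2 * qq n (E n i) (E n i) := fun i => Ricc_eq n h2 a b c μ k _ _
  rw [Finset.sum_congr rfl fun i _ => key i, sum_split2 n h2]
  have hrest : ∑ j ∈ (Finset.univ.erase (⟨0, by omega⟩ : Fin n)).erase ⟨1, by omega⟩,
      (((n : ℝ) - 1) * (a ^ 2 + b ^ 2 + c ^ 2 + k) * gg n (E n j) (E n j)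
        + ((n : ℝ) - 2) * (a * μ) * pp n (E n j) (E n j)
        + ((n : ℝ) - 2) * (b * μ) * dd n (E n j) (E n j)
        - 2 * μ ^ 2 * qq n (E n j) (E n j))
      = ∑ j ∈ (Finset.univ.erase (⟨0, by omega⟩ : Fin n)).erase ⟨1, by omega⟩,
          ((n : ℝ) - 1) * (a ^ 2 + b ^ 2 + c ^ 2 + k) := by
    refine Finset.sum_congr rfl fun j hj => ?_
    obtain ⟨hj0, hj1⟩ := mem_split2 n h2 j hj
    unfold pp dd qq
    simp [E, ggEE, coordE0 n h2, coordE1 n h2, hj0, hj1]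
  rw [hrest, Finset.sum_const, card_split2 n h2]
  have hcast : ((n - 2 : ℕ) : ℝ) = (n : ℝ) - 2 := by
    have : (2 : ℕ) ≤ n := h2
    push_cast [Nat.cast_sub this]
    ring
  rw [nsmul_eq_mul, hcast]
  unfold pp dd qq
  simp [E, ggEE, coordE0 n h2, coordE1 n h2]
  ring

lemma gg_curvOpL (n : ℕ) (h2 : 2 ≤ n) (a b c μ k : ℝ) (X Y Z W : Fin n → ℝ) :
    gg n (curvOp n (Rt n a b c μ k) X Y Z) W = Rt n a b c μ k X Y Z W := by
  unfold gg curvOp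
  have key : ∀ j : Fin n, Rt n a b c μ k X Y Z (E n j) * W j
      = (a * B1 n a μ Y Z + b * B2 n b μ Y Z + (c ^ 2 + k) * gg n Y Z) * (X j * W j)
        - (a * B1 n a μ X Z + b * B2 n b μ X Z + (c ^ 2 + k) * gg n X Z) * (Y j * W j)
        + (if (j : ℕ) = 0 then
            (μ * (coord n X 1 * B1 n a μ Y Z + coord n X 0 * B2 n b μ Y Z
              - coord n Y 1 * B1 n a μ X Z - coord n Y 0 * B2 n b μ X Z)) * W j else 0)
        + (if (j : ℕ) = 1 then
            (μ * (coord n X 0 * B1 n a μ Y Z - coord n Y 0 * B1 n a μ X Z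
              - coord n X 1 * B2 n b μ Y Z + coord n Y 1 * B2 n b μ X Z)) * W j else 0) := by
    intro j
    rw [Rt_eq n h2]
    unfold B1 B2 pp dd
    simp only [ggE', coordE0 n h2, coordE1 n h2]
    split_ifs
    all_goals try ring
    all_goals (exfalso; omega)
  simp_rw [key]
  rw [Finset.sum_add_distrib, Finset.sum_add_distrib, Finset.sum_sub_distrib,
    ← Finset.mul_sum, ← Finset.mul_sum, sum_ind0 n h2, sum_ind1 n h2, Rt_eq n h2]
  unfold B1 B2 pp dd gg
  rw [coord_eq n 0 (by omega) W, coord_eq n 1 (by omega) W]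
  ring

lemma gg_curvOpR (n : ℕ) (h2 : 2 ≤ n) (a b c μ k : ℝ) (X Y Z W : Fin n → ℝ) :
    gg n W (curvOp n (Rt n a b c μ k) X Y Z) = Rt n a b c μ k X Y Z W := by
  rw [gg_comm]; exact gg_curvOpL n h2 a b c μ k X Y Z W

lemma coord_curvOp0 (n : ℕ) (h2 : 2 ≤ n) (a b c μ k : ℝ) (X Y Z : Fin n → ℝ) :
    coord n (curvOp n (Rt n a b c μ k) X Y Z) 0
      = (a * B1 n a μ Y Z + b * B2 n b μ Y Z + (c ^ 2 + k) * gg n Y Z) * coord n X 0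
        - (a * B1 n a μ X Z + b * B2 n b μ X Z + (c ^ 2 + k) * gg n X Z) * coord n Y 0
        + μ * (coord n X 1 * B1 n a μ Y Z + coord n X 0 * B2 n b μ Y Z
            - coord n Y 1 * B1 n a μ X Z - coord n Y 0 * B2 n b μ X Z) := by
  rw [coord_eq n 0 (by omega)]
  show Rt n a b c μ k X Y Z (E n ⟨0, by omega⟩) = _
  rw [Rt_eq n h2]
  unfold B1 B2 pp dd
  simp [ggE', coordE0 n h2, coordE1 n h2, coord_eq n 0 (by omega), coord_eq n 1 (by omega)]
  ring

lemma coord_curvOp1 (n : ℕ) (h2 : 2 ≤ n) (a b c μ k : ℝ) (X Y Z : Fin n → ℝ) :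
    coord n (curvOp n (Rt n a b c μ k) X Y Z) 1
      = (a * B1 n a μ Y Z + b * B2 n b μ Y Z + (c ^ 2 + k) * gg n Y Z) * coord n X 1
        - (a * B1 n a μ X Z + b * B2 n b μ X Z + (c ^ 2 + k) * gg n X Z) * coord n Y 1
        + μ * (coord n X 0 * B1 n a μ Y Z - coord n Y 0 * B1 n a μ X Z
            - coord n X 1 * B2 n b μ Y Z + coord n Y 1 * B2 n b μ X Z) := by
  rw [coord_eq n 1 (by omega)]
  show Rt n a b c μ k X Y Z (E n ⟨1, by omega⟩) = _
  rw [Rt_eq n h2]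
  unfold B1 B2 pp dd
  simp [ggE', coordE0 n h2, coordE1 n h2, coord_eq n 0 (by omega), coord_eq n 1 (by omega)]
  ring

lemma gg_wedgeL (n : ℕ) (X Y Z W : Fin n → ℝ) :
    gg n (wedge n (gg n) X Y Z) W = gg n Y Z * gg n X W - gg n X Z * gg n Y W := by
  unfold wedge gg
  simp_rw [sub_mul, mul_assoc]
  rw [Finset.sum_sub_distrib, ← Finset.mul_sum, ← Finset.mul_sum]

lemma gg_wedgeR (n : ℕ) (X Y Z W : Fin n → ℝ) :
    gg n W (wedge n (gg n) X Y Z) = gg n Y Z * gg n X W - gg n X Z * gg n Y W := by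
  rw [gg_comm]; exact gg_wedgeL n X Y Z W

lemma coord_wedge0 (n : ℕ) (h2 : 2 ≤ n) (X Y Z : Fin n → ℝ) :
    coord n (wedge n (gg n) X Y Z) 0
      = gg n Y Z * coord n X 0 - gg n X Z * coord n Y 0 := by
  rw [coord_eq n 0 (by omega), coord_eq n 0 (by omega) X, coord_eq n 0 (by omega) Y]
  rfl

lemma coord_wedge1 (n : ℕ) (h2 : 2 ≤ n) (X Y Z : Fin n → ℝ) :
    coord n (wedge n (gg n) X Y Z) 1
      = gg n Y Z * coord n X 1 - gg n X Z * coord n Y 1 := by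
  rw [coord_eq n 1 (by omega), coord_eq n 1 (by omega) X, coord_eq n 1 (by omega) Y]
  rfl

lemma nr1 (n : ℕ) (hn : 4 ≤ n) : ((n : ℝ) - 1) ≠ 0 := by
  have : (4 : ℝ) ≤ (n : ℝ) := by exact_mod_cast hn
  intro h; linarith

lemma nr2 (n : ℕ) (hn : 4 ≤ n) : ((n : ℝ) - 2) ≠ 0 := by
  have : (4 : ℝ) ≤ (n : ℝ) := by exact_mod_cast hn
  intro h; linarith

lemma Ct_mu0 (n : ℕ) (hn : 4 ≤ n) (a b c k : ℝ) (X1 X2 X3 X4 : Fin n → ℝ) :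
    Ct n a b c 0 k X1 X2 X3 X4 = 0 := by
  have h2 : 2 ≤ n := by omega
  unfold Ct KN
  simp only [Rt_eq n h2, Ricc_eq n h2, tau_eq n h2]
  unfold B1 B2 pp dd qq
  field_simp [nr1 n hn, nr2 n hn]
  ring

set_option maxHeartbeats 1000000 in
lemma part2 (n : ℕ) (hn : 4 ≤ n) (c μ k : ℝ) (X1 X2 X3 X4 X Y : Fin n → ℝ) :
    RC n 0 0 c μ k X1 X2 X3 X4 X Y
      = (k + c ^ 2) * Q n (gg n) (Ct n 0 0 c μ k) X1 X2 X3 X4 X Y := by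
  have h2 : 2 ≤ n := by omega
  simp only [RC, Q, dotT, Ct, KN]
  simp only [Rt_eq n h2, Ricc_eq n h2, tau_eq n h2]
  simp only [B1, B2, pp, dd, qq]
  simp only [gg_curvOpL n h2, gg_curvOpR n h2, gg_wedgeL, gg_wedgeR,
    coord_curvOp0 n h2, coord_curvOp1 n h2, coord_wedge0 n h2, coord_wedge1 n h2]
  simp only [Rt_eq n h2]
  simp only [B1, B2, pp, dd, qq]
  field_simp [nr1 n hn, nr2 n hn]
  ring

lemma Ct_poly (n : ℕ) (hn : 4 ≤ n) (a b c μ k : ℝ) (X1 X2 X3 X4 : Fin n → ℝ) :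
    (2 * ((n : ℝ) - 1) * ((n : ℝ) - 2)) * Ct n a b c μ k X1 X2 X3 X4
      = 2 * ((n : ℝ) - 1) * ((n : ℝ) - 2) * Rt n a b c μ k X1 X2 X3 X4
        - 2 * ((n : ℝ) - 1) * KN n (gg n) (Ricc n a b c μ k) X1 X2 X3 X4
        + tau n a b c μ k * KN n (gg n) (gg n) X1 X2 X3 X4 := by
  unfold Ct
  field_simp [nr1 n hn, nr2 n hn]

lemma mulD (D t1 t2 t3 t4 : ℝ) :
    D * (-t1 - t2 - t3 - t4) = -(D * t1) - D * t2 - D * t3 - D * t4 := by ring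

lemma inst1RC (n : ℕ) (hn : 4 ≤ n) (a b c μ k : ℝ) :
    (2 * ((n : ℝ) - 1) * ((n : ℝ) - 2)) * RC n a b c μ k (E n ⟨0, by omega⟩) (E n ⟨1, by omega⟩) (E n ⟨0, by omega⟩) (E n ⟨2, by omega⟩) (E n ⟨0, by omega⟩) (E n ⟨2, by omega⟩)
      = -(4*((n:ℝ)-1)*((n:ℝ)-3))*(a*μ^3) := by
  have h2 : 2 ≤ n := by omega
  simp only [RC, dotT]
  rw [mulD]
  simp only [Ct_poly n hn, KN]
  simp only [Rt_eq n h2, Ricc_eq n h2, tau_eq n h2]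
  simp only [B1, B2, pp, dd, qq]
  simp only [gg_curvOpL n h2, gg_curvOpR n h2, coord_curvOp0 n h2, coord_curvOp1 n h2]
  simp only [Rt_eq n h2]
  simp only [B1, B2, pp, dd, qq]
  simp only [ggEE, coordE0 n h2, coordE1 n h2]
  simp [Fin.mk.injEq]
  ring

lemma inst1Q (n : ℕ) (hn : 4 ≤ n) (a b c μ k : ℝ) :
    (2 * ((n : ℝ) - 1) * ((n : ℝ) - 2)) * Q n (gg n) (Ct n a b c μ k) (E n ⟨0, by omega⟩) (E n ⟨1, by omega⟩) (E n ⟨0, by omega⟩) (E n ⟨2, by omega⟩) (E n ⟨0, by omega⟩) (E n ⟨2, by omega⟩)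
      = 0 := by
  have h2 : 2 ≤ n := by omega
  simp only [Q, dotT]
  rw [mulD]
  simp only [Ct_poly n hn, KN]
  simp only [Rt_eq n h2, Ricc_eq n h2, tau_eq n h2]
  simp only [B1, B2, pp, dd, qq]
  simp only [gg_wedgeL, gg_wedgeR, coord_wedge0 n h2, coord_wedge1 n h2]
  simp only [ggEE, coordE0 n h2, coordE1 n h2]
  simp [Fin.mk.injEq]
  ring

lemma inst2RC (n : ℕ) (hn : 4 ≤ n) (a b c μ k : ℝ) :
    (2 * ((n : ℝ) - 1) * ((n : ℝ) - 2)) * RC n a b c μ k (E n ⟨0, by omega⟩) (E n ⟨1, by omega⟩) (E n ⟨0, by omega⟩) (E n ⟨2, by omega⟩) (E n ⟨1, by omega⟩) (E n ⟨2, by omega⟩)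
      = -4*((n:ℝ)-1)*((n:ℝ)-3)*μ^2*(k+c^2+a^2+b^2)+4*((n:ℝ)-1)*((n:ℝ)-3)*(b*μ^3) := by
  have h2 : 2 ≤ n := by omega
  simp only [RC, dotT]
  rw [mulD]
  simp only [Ct_poly n hn, KN]
  simp only [Rt_eq n h2, Ricc_eq n h2, tau_eq n h2]
  simp only [B1, B2, pp, dd, qq]
  simp only [gg_curvOpL n h2, gg_curvOpR n h2, coord_curvOp0 n h2, coord_curvOp1 n h2]
  simp only [Rt_eq n h2]
  simp only [B1, B2, pp, dd, qq]
  simp only [ggEE, coordE0 n h2, coordE1 n h2]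
  simp [Fin.mk.injEq]
  ring

lemma inst2Q (n : ℕ) (hn : 4 ≤ n) (a b c μ k : ℝ) :
    (2 * ((n : ℝ) - 1) * ((n : ℝ) - 2)) * Q n (gg n) (Ct n a b c μ k) (E n ⟨0, by omega⟩) (E n ⟨1, by omega⟩) (E n ⟨0, by omega⟩) (E n ⟨2, by omega⟩) (E n ⟨1, by omega⟩) (E n ⟨2, by omega⟩)
      = -4*((n:ℝ)-1)*((n:ℝ)-3)*μ^2 := by
  have h2 : 2 ≤ n := by omega
  simp only [Q, dotT]
  rw [mulD]
  simp only [Ct_poly n hn, KN]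
  simp only [Rt_eq n h2, Ricc_eq n h2, tau_eq n h2]
  simp only [B1, B2, pp, dd, qq]
  simp only [gg_wedgeL, gg_wedgeR, coord_wedge0 n h2, coord_wedge1 n h2]
  simp only [ggEE, coordE0 n h2, coordE1 n h2]
  simp [Fin.mk.injEq]
  ring

lemma inst3RC (n : ℕ) (hn : 4 ≤ n) (a b c μ k : ℝ) :
    (2 * ((n : ℝ) - 1) * ((n : ℝ) - 2)) * RC n a b c μ k (E n ⟨0, by omega⟩) (E n ⟨1, by omega⟩) (E n ⟨1, by omega⟩) (E n ⟨2, by omega⟩) (E n ⟨2, by omega⟩) (E n ⟨0, by omega⟩)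
      = -4*((n:ℝ)-1)*((n:ℝ)-3)*μ^2*(k+c^2+a^2+b^2)-4*((n:ℝ)-1)*((n:ℝ)-3)*(b*μ^3) := by
  have h2 : 2 ≤ n := by omega
  simp only [RC, dotT]
  rw [mulD]
  simp only [Ct_poly n hn, KN]
  simp only [Rt_eq n h2, Ricc_eq n h2, tau_eq n h2]
  simp only [B1, B2, pp, dd, qq]
  simp only [gg_curvOpL n h2, gg_curvOpR n h2, coord_curvOp0 n h2, coord_curvOp1 n h2]
  simp only [Rt_eq n h2]
  simp only [B1, B2, pp, dd, qq]
  simp only [ggEE, coordE0 n h2, coordE1 n h2]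
  simp [Fin.mk.injEq]
  ring

lemma inst3Q (n : ℕ) (hn : 4 ≤ n) (a b c μ k : ℝ) :
    (2 * ((n : ℝ) - 1) * ((n : ℝ) - 2)) * Q n (gg n) (Ct n a b c μ k) (E n ⟨0, by omega⟩) (E n ⟨1, by omega⟩) (E n ⟨1, by omega⟩) (E n ⟨2, by omega⟩) (E n ⟨2, by omega⟩) (E n ⟨0, by omega⟩)
      = -4*((n:ℝ)-1)*((n:ℝ)-3)*μ^2 := by
  have h2 : 2 ≤ n := by omega
  simp only [Q, dotT]
  rw [mulD]
  simp only [Ct_poly n hn, KN]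
  simp only [Rt_eq n h2, Ricc_eq n h2, tau_eq n h2]
  simp only [B1, B2, pp, dd, qq]
  simp only [gg_wedgeL, gg_wedgeR, coord_wedge0 n h2, coord_wedge1 n h2]
  simp only [ggEE, coordE0 n h2, coordE1 n h2]
  simp [Fin.mk.injEq]
  ring

/-- `R·C` and `Q(g,C)` are linearly dependent iff `μ = 0` or
`a = 0` and `b = 0`; and if `a = 0` and `b = 0` then `R·C = (k̃ + c²) Q(g,C)`. -/
theorem statement_11 (n : ℕ) (hn : 4 ≤ n) (a b c μ k : ℝ) :
    ((∃ L : ℝ, ∀ X1 X2 X3 X4 X Y : Fin n → ℝ,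
        RC n a b c μ k X1 X2 X3 X4 X Y
          = L * Q n (gg n) (Ct n a b c μ k) X1 X2 X3 X4 X Y)
      ↔ (μ = 0 ∨ (a = 0 ∧ b = 0)))
    ∧ ((a = 0 ∧ b = 0) →
        ∀ X1 X2 X3 X4 X Y : Fin n → ℝ,
          RC n a b c μ k X1 X2 X3 X4 X Y
            = (k + c ^ 2) * Q n (gg n) (Ct n a b c μ k) X1 X2 X3 X4 X Y) := by
  have hcast : (4 : ℝ) ≤ (n : ℝ) := by exact_mod_cast hn
  constructor
  · constructor
    · rintro ⟨L, hL⟩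
      by_cases hμ : μ = 0
      · exact Or.inl hμ
      refine Or.inr ?_
      have hn1 : (0:ℝ) < (n : ℝ) - 1 := by linarith
      have hn3 : (0:ℝ) < (n : ℝ) - 3 := by linarith
      have hfac : ∀ t : ℝ, ((n : ℝ) - 1) * ((n : ℝ) - 3) * (t * μ ^ 3) = 0 → t = 0 := by
        intro t ht
        rcases mul_eq_zero.mp ht with h | h
        · exact absurd h (mul_ne_zero (ne_of_gt hn1) (ne_of_gt hn3))
        · rcases mul_eq_zero.mp h with h' | h'
          · exact h'
          · exact absurd h' (pow_ne_zero 3 hμ)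
      have e1 := hL (E n ⟨0, by omega⟩) (E n ⟨1, by omega⟩) (E n ⟨0, by omega⟩)
        (E n ⟨2, by omega⟩) (E n ⟨0, by omega⟩) (E n ⟨2, by omega⟩)
      have e2 := hL (E n ⟨0, by omega⟩) (E n ⟨1, by omega⟩) (E n ⟨0, by omega⟩)
        (E n ⟨2, by omega⟩) (E n ⟨1, by omega⟩) (E n ⟨2, by omega⟩)
      have e3 := hL (E n ⟨0, by omega⟩) (E n ⟨1, by omega⟩) (E n ⟨1, by omega⟩)
        (E n ⟨2, by omega⟩) (E n ⟨2, by omega⟩) (E n ⟨0, by omega⟩)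
      have r1 := inst1RC n hn a b c μ k
      have q1 := inst1Q n hn a b c μ k
      have r2 := inst2RC n hn a b c μ k
      have q2 := inst2Q n hn a b c μ k
      have r3 := inst3RC n hn a b c μ k
      have q3 := inst3Q n hn a b c μ k
      constructor
      · refine hfac a ?_
        linear_combination (1/4) * r1 - (L/4) * q1 - ((2*((n:ℝ)-1)*((n:ℝ)-2))/4) * e1
      · refine hfac b ?_
        linear_combination (-(1:ℝ)/8) * (r2 - r3) + (L/8) * (q2 - q3)
          + ((2*((n:ℝ)-1)*((n:ℝ)-2))/8) * (e2 - e3)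
    · rintro (hμ | ⟨ha, hb⟩)
      · subst hμ
        refine ⟨0, fun X1 X2 X3 X4 X Y => ?_⟩
        simp only [RC, Q, dotT, Ct_mu0 n hn]
        ring
      · subst ha; subst hb
        exact ⟨k + c ^ 2, fun X1 X2 X3 X4 X Y => part2 n hn c μ k X1 X2 X3 X4 X Y⟩
  · rintro ⟨ha, hb⟩ X1 X2 X3 X4 X Y
    subst ha; subst hb
    exact part2 n hn c μ k X1 X2 X3 X4 X Y

end Wintgen
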